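/- In a weighted tree with strictly positive edge weights, the effective resistance between two nodes m and n, defined as r_mn^eff := (e_m − e_n)ᵀ R (e_m − e_n) where R is the inverse of the reduced weighted Laplacian (grounding the root), equals the sum of the edge weights along the unique path from m to n. -/

import Mathlib

/-- A finite rooted tree, encoded by a parent function together with a
consistent depth function (root at depth `0`). -/
structure FinRootedTree (V : Type*) [Fintype V] [DecidableEq V] where
  root : V
  parent : V → V
  depth : V → ℕ
  depth_root : depth root = 0
  parent_root : parent root = root
  depth_parent : ∀ v, v ≠ root → depth (parent v) + 1 = depth v
  eq_root_of_depth_eq_zero : ∀ v, depth v = 0 → v = root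

namespace FinRootedTree

variable {V : Type*} [Fintype V] [DecidableEq V]

/-- The ancestor `α_m^k` of `m` at depth `k` (meaningful for `k ≤ depth m`). -/
def anc (G : FinRootedTree V) (m : V) (k : ℕ) : V := G.parent^[G.depth m - k] m

/-- `a` is an ancestor of `m` (with `m` an ancestor of itself). -/
def IsAncestor (G : FinRootedTree V) (a m : V) : Prop :=
  ∃ k, k ≤ G.depth m ∧ G.anc m k = a

/-- The set `D_n` of descendants of `n`, including `n` itself. -/
def desc (G : FinRootedTree V) (n : V) : Set V := {s | G.IsAncestor n s}

/-- The `k`-th level set `N_m^k` of node `m` (for `k ≤ depth m`). -/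
def levelSet (G : FinRootedTree V) (m : V) (k : ℕ) : Set V :=
  if k < G.depth m then G.desc (G.anc m k) \ G.desc (G.anc m (k + 1)) else G.desc m

/-- A leaf node: no descendants besides itself. -/
def IsLeaf (G : FinRootedTree V) (m : V) : Prop := G.desc m = {m}

/-- `R_{m,n}`: the sum of the weights of all edges both of whose endpoints are
common ancestors of `m` and `n`.  The edge joining `v ≠ root` to its parent is
recorded by its lower endpoint `v` with weight `w v`. -/
noncomputable def Rres (G : FinRootedTree V) (w : V → ℝ) (m n : V) : ℝ :=
  ∑ᶠ v ∈ {v | v ≠ G.root ∧ G.IsAncestor v m ∧ G.IsAncestor v n}, w v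


end FinRootedTree

open Matrix

/-- Conductance between `u` and `v`: `1/r` on the (unique) edge joining them, else `0`.
The edge joining `v ≠ root` to its parent carries resistance `w v`. -/
noncomputable def edgeCond {n : ℕ} (G : FinRootedTree (Fin (n + 1))) (w : Fin (n + 1) → ℝ)
    (u v : Fin (n + 1)) : ℝ :=
  (if u ≠ G.root ∧ G.parent u = v then 1 / w u else 0) +
    (if v ≠ G.root ∧ G.parent v = u then 1 / w v else 0)

/-- The weighted graph Laplacian with conductances `edgeCond`. -/
noncomputable def lap {n : ℕ} (G : FinRootedTree (Fin (n + 1))) (w : Fin (n + 1) → ℝ) :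
    Matrix (Fin (n + 1)) (Fin (n + 1)) ℝ :=
  fun u v => if u = v then ∑ x, edgeCond G w u x else -edgeCond G w u v

/-- `R`, the inverse of the reduced Laplacian obtained by grounding (deleting) the root `0`. -/
noncomputable def redLapInv {n : ℕ} (G : FinRootedTree (Fin (n + 1))) (w : Fin (n + 1) → ℝ) :
    Matrix (Fin n) (Fin n) ℝ :=
  (Matrix.of fun i j : Fin n => lap G w i.succ j.succ)⁻¹

namespace FinRootedTree
variable {V : Type*} [Fintype V] [DecidableEq V] (G : FinRootedTree V)

lemma iterate_root (t : ℕ) : G.parent^[t] G.root = G.root := by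
  induction t with
  | zero => rfl
  | succ t ih => rw [Function.iterate_succ_apply', ih, G.parent_root]

lemma depth_pos (v : V) (h : v ≠ G.root) : 0 < G.depth v := by
  rcases Nat.eq_zero_or_pos (G.depth v) with h0 | h0
  · exact absurd (G.eq_root_of_depth_eq_zero v h0) h
  · exact h0

lemma depth_iterate (m : V) : ∀ j, j ≤ G.depth m → G.depth (G.parent^[j] m) = G.depth m - j := by
  intro j
  induction j with
  | zero => simp
  | succ j ih =>
    intro hj
    have hj' : j ≤ G.depth m := Nat.le_of_succ_le hj
    have h1 := ih hj'
    have hne : G.parent^[j] m ≠ G.root := by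
      intro h
      rw [h, G.depth_root] at h1
      omega
    have h2 := G.depth_parent _ hne
    rw [Function.iterate_succ_apply']
    omega

lemma iterate_depth (m : V) : G.parent^[G.depth m] m = G.root := by
  apply G.eq_root_of_depth_eq_zero
  rw [G.depth_iterate m _ le_rfl]
  omega

lemma iterate_of_depth_le (m : V) (j : ℕ) (h : G.depth m ≤ j) : G.parent^[j] m = G.root := by
  have : j = (j - G.depth m) + G.depth m := by omega
  rw [this, Function.iterate_add_apply, G.iterate_depth, G.iterate_root]

lemma isAncestor_iff (a m : V) : G.IsAncestor a m ↔ ∃ j, G.parent^[j] m = a := by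
  constructor
  · rintro ⟨kk, hk, rfl⟩
    exact ⟨G.depth m - kk, rfl⟩
  · rintro ⟨j, rfl⟩
    by_cases hj : j ≤ G.depth m
    · exact ⟨G.depth m - j, Nat.sub_le _ _, by rw [anc, Nat.sub_sub_self hj]⟩
    · refine ⟨0, Nat.zero_le _, ?_⟩
      rw [anc, Nat.sub_zero, G.iterate_depth,
        G.iterate_of_depth_le m j (le_of_not_ge hj)]

lemma isAncestor_self (m : V) : G.IsAncestor m m :=
  (G.isAncestor_iff m m).2 ⟨0, rfl⟩

lemma depth_le_of_isAncestor {a m : V} (h : G.IsAncestor a m) : G.depth a ≤ G.depth m := by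
  rw [isAncestor_iff] at h
  obtain ⟨j, rfl⟩ := h
  by_cases hj : j ≤ G.depth m
  · rw [G.depth_iterate m j hj]; omega
  · rw [G.iterate_of_depth_le m j (le_of_not_ge hj), G.depth_root]; omega

lemma isAncestor_parent {a m : V} (h : G.IsAncestor a m) : G.IsAncestor (G.parent a) m := by
  rw [isAncestor_iff] at h ⊢
  obtain ⟨j, rfl⟩ := h
  exact ⟨j + 1, by rw [Function.iterate_succ_apply']⟩

lemma isAncestor_of_parent {v x m : V} (h : G.IsAncestor v m) (hp : G.parent x = m) :
    G.IsAncestor v x := by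
  rw [isAncestor_iff] at h ⊢
  obtain ⟨j, rfl⟩ := h
  exact ⟨j + 1, by rw [Function.iterate_succ_apply, hp]⟩

lemma eq_iterate_of_isAncestor {a m : V} (h : G.IsAncestor a m) :
    a = G.parent^[G.depth m - G.depth a] m := by
  rw [isAncestor_iff] at h
  obtain ⟨j, rfl⟩ := h
  by_cases hj : j ≤ G.depth m
  · rw [G.depth_iterate m j hj]
    congr 1
    omega
  · rw [G.iterate_of_depth_le m j (le_of_not_ge hj), G.depth_root, Nat.sub_zero,
      G.iterate_depth]

lemma isAncestor_unique {a b m : V} (ha : G.IsAncestor a m) (hb : G.IsAncestor b m)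
    (hd : G.depth a = G.depth b) : a = b := by
  rw [G.eq_iterate_of_isAncestor ha, G.eq_iterate_of_isAncestor hb, hd]

lemma isAncestor_root_iff {v : V} : G.IsAncestor v G.root ↔ v = G.root := by
  rw [isAncestor_iff]
  constructor
  · rintro ⟨j, rfl⟩; exact G.iterate_root j
  · rintro rfl; exact ⟨0, rfl⟩

lemma not_isAncestor_parent_self {u : V} (hu : u ≠ G.root) : ¬ G.IsAncestor u (G.parent u) := by
  intro h
  have h1 := G.depth_le_of_isAncestor h
  have h2 := G.depth_parent u hu
  omega

lemma isAncestor_parent_iff {v u : V} (hvu : v ≠ u) :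
    G.IsAncestor v u ↔ G.IsAncestor v (G.parent u) := by
  constructor
  · intro h
    rw [isAncestor_iff] at h ⊢
    obtain ⟨j, rfl⟩ := h
    rcases Nat.eq_zero_or_pos j with rfl | hj
    · exact absurd rfl hvu
    · exact ⟨j - 1, by rw [← Function.iterate_succ_apply, Nat.succ_eq_add_one]; congr 1; omega⟩
  · intro h
    exact G.isAncestor_of_parent h rfl

lemma not_isAncestor_of_parent_eq {v u : V} (hv : v ≠ G.root) (hp : G.parent v = u) :
    ¬ G.IsAncestor v u := by
  intro h
  have h1 := G.depth_le_of_isAncestor h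
  have h2 := G.depth_parent v hv
  rw [hp] at h2
  omega

/-- existence of the unique child of `u` on the path to `j`. -/
lemma exists_child {u j : V} (hu : u ≠ G.root) (h : G.IsAncestor u j) (hne : u ≠ j) :
    ∃ v, v ≠ G.root ∧ G.parent v = u ∧ G.IsAncestor v j := by
  have hd := G.depth_le_of_isAncestor h
  have hdu := G.depth_pos u hu
  have heq := G.eq_iterate_of_isAncestor h
  obtain ⟨t, ht⟩ : ∃ t, G.depth j - G.depth u = t + 1 := by
    rcases Nat.eq_zero_or_pos (G.depth j - G.depth u) with h0 | h0
    · rw [h0] at heq; simp at heq; exact absurd heq hne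
    · exact ⟨_, (Nat.succ_pred_eq_of_pos h0).symm⟩
  rw [ht] at heq
  refine ⟨G.parent^[t] j, ?_, ?_, (G.isAncestor_iff _ _).2 ⟨t, rfl⟩⟩
  · intro hr
    have := G.depth_iterate j t (by omega)
    rw [hr, G.depth_root] at this
    omega
  · rw [heq]; exact (Function.iterate_succ_apply' G.parent t j).symm


end FinRootedTree

open Matrix
open scoped Classical

lemma edgeCond_self {n : ℕ} (G : FinRootedTree (Fin (n + 1))) (w : Fin (n + 1) → ℝ)
    (u : Fin (n + 1)) : edgeCond G w u u = 0 := by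
  have h : ¬(u ≠ G.root ∧ G.parent u = u) := by
    rintro ⟨h1, h2⟩
    have := G.depth_parent u h1
    rw [h2] at this
    omega
  simp [edgeCond, h]

lemma lap_indicator {n : ℕ} (G : FinRootedTree (Fin (n + 1))) (w : Fin (n + 1) → ℝ)
    (u v : Fin (n + 1)) (hu : u ≠ G.root) (hv : v ≠ G.root) :
    ∑ x, lap G w u x * (if G.IsAncestor v x then (1 : ℝ) else 0)
      = (if v = u then 1 / w u else 0) - (if G.parent v = u then 1 / w v else 0) := by
  set F : Fin (n + 1) → ℝ := fun x => if G.IsAncestor v x then (1 : ℝ) else 0 with hF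
  have e1 : ∀ x, lap G w u x * F x
      = (if u = x then (∑ y, edgeCond G w u y) * F u + edgeCond G w u x * F x else 0)
        - edgeCond G w u x * F x := by
    intro x
    by_cases h : u = x
    · subst h; simp [lap]
    · simp [lap, h]
  calc ∑ x, lap G w u x * F x
      = ∑ x, ((if u = x then (∑ y, edgeCond G w u y) * F u + edgeCond G w u x * F x else 0)
          - edgeCond G w u x * F x) := Finset.sum_congr rfl fun x _ => e1 x
    _ = ((∑ y, edgeCond G w u y) * F u + edgeCond G w u u * F u)
          - ∑ x, edgeCond G w u x * F x := by
        rw [Finset.sum_sub_distrib, Finset.sum_ite_eq, if_pos (Finset.mem_univ u)]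
    _ = ∑ x, edgeCond G w u x * (F u - F x) := by
        rw [edgeCond_self, zero_mul, add_zero, Finset.sum_mul, ← Finset.sum_sub_distrib]
        exact Finset.sum_congr rfl fun x _ => by ring
    _ = ∑ x, ((if G.parent u = x then 1 / w u else 0) * (F u - F x)
          + (if x ≠ G.root ∧ G.parent x = u then 1 / w x else 0) * (F u - F x)) := by
        refine Finset.sum_congr rfl fun x _ => ?_
        rw [edgeCond, add_mul]
        congr 2
        simp [hu]
    _ = (if v = u then 1 / w u else 0) - (if G.parent v = u then 1 / w v else 0) := by
        rw [Finset.sum_add_distrib]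
        have hA : ∀ x, (if x ≠ G.root ∧ G.parent x = u then 1 / w x else 0) * (F u - F x)
            = if x = v ∧ G.parent v = u then -(1 / w v) else 0 := by
          intro x
          by_cases hx : x ≠ G.root ∧ G.parent x = u
          · rw [if_pos hx]
            by_cases hAu : G.IsAncestor v u
            · have hAx : G.IsAncestor v x := G.isAncestor_of_parent hAu hx.2
              rw [hF]
              simp only [if_pos hAu, if_pos hAx, sub_self, mul_zero]
              rw [eq_comm, if_neg]
              rintro ⟨rfl, hpv⟩
              exact G.not_isAncestor_of_parent_eq hx.1 hpv hAu
            · by_cases hxv : x = v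
              · subst hxv
                simp only [hF]
                rw [if_neg hAu, if_pos (G.isAncestor_self x)]
                simp [hx.2]
              · have hAx : ¬ G.IsAncestor v x := by
                  intro hAx
                  refine hAu ?_
                  have := (G.isAncestor_parent_iff (fun hvx => hxv (hvx.symm))).1 hAx
                  rwa [hx.2] at this
                rw [hF]
                simp only [if_neg hAu, if_neg hAx, sub_self, mul_zero]
                rw [eq_comm, if_neg]
                rintro ⟨rfl, _⟩
                exact hxv rfl
          · rw [if_neg hx, zero_mul, eq_comm, if_neg]
            rintro ⟨rfl, hpv⟩
            exact hx ⟨hv, hpv⟩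
        have h1 : (∑ x, if x = v ∧ G.parent v = u then -(1 / w v) else 0)
            = if G.parent v = u then -(1 / w v) else 0 := by
          by_cases hp : G.parent v = u
          · simp [hp, Finset.sum_ite_eq']
          · simp [hp]
        have h2 : (∑ x, (if G.parent u = x then 1 / w u else 0) * (F u - F x))
            = (1 / w u) * (F u - F (G.parent u)) := by
          have : ∀ x, (if G.parent u = x then 1 / w u else 0) * (F u - F x)
              = if G.parent u = x then (1 / w u) * (F u - F x) else 0 := by
            intro x; split_ifs <;> simp
          rw [Finset.sum_congr rfl fun x _ => this x, Finset.sum_ite_eq,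
            if_pos (Finset.mem_univ _)]
        have h3 : F u - F (G.parent u) = if v = u then 1 else 0 := by
          by_cases hvu : v = u
          · subst hvu
            rw [hF]
            simp only [if_pos (G.isAncestor_self v),
              if_neg (G.not_isAncestor_parent_self hu)]
            simp
          · rw [hF]
            simp only [if_neg hvu]
            rw [G.isAncestor_parent_iff hvu, sub_self]
        rw [Finset.sum_congr rfl fun x _ => hA x, h1, h2, h3]
        have hpu : G.parent u ≠ u := by
          intro h
          have := G.depth_parent u hu
          rw [h] at this
          omega
        by_cases hvu : v = u
        · have hp : G.parent v ≠ u := by rw [hvu]; exact hpu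
          rw [if_pos hvu, if_neg hp, if_neg hp, if_pos hvu]
          ring
        · rw [if_neg hvu, if_neg hvu]
          by_cases hp : G.parent v = u
          · rw [if_pos hp, if_pos hp]; ring
          · rw [if_neg hp, if_neg hp]; ring

lemma child_sum {n : ℕ} (G : FinRootedTree (Fin (n + 1))) (u j : Fin (n + 1))
    (hu : u ≠ G.root) :
    (∑ v : Fin (n + 1), if v ≠ G.root ∧ G.IsAncestor v j ∧ G.parent v = u then (1 : ℝ) else 0)
      = if G.IsAncestor u j ∧ u ≠ j then 1 else 0 := by
  by_cases h : G.IsAncestor u j ∧ u ≠ j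
  · obtain ⟨v0, hv0r, hv0p, hv0a⟩ := G.exists_child hu h.1 h.2
    rw [if_pos h, Finset.sum_eq_single v0]
    · rw [if_pos ⟨hv0r, hv0a, hv0p⟩]
    · intro v _ hvne
      rw [if_neg]
      rintro ⟨h1, h2, h3⟩
      apply hvne
      apply G.isAncestor_unique h2 hv0a
      have d1 := G.depth_parent v h1
      have d2 := G.depth_parent v0 hv0r
      rw [h3] at d1; rw [hv0p] at d2; omega
    · intro hmem; exact absurd (Finset.mem_univ v0) hmem
  · rw [if_neg h, Finset.sum_eq_zero]
    intro v _
    rw [if_neg]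
    rintro ⟨h1, h2, h3⟩
    refine h ⟨?_, ?_⟩
    · rw [← h3]; exact G.isAncestor_parent h2
    · rintro rfl
      exact G.not_isAncestor_of_parent_eq h1 h3 h2

noncomputable def Mres {n : ℕ} (G : FinRootedTree (Fin (n + 1))) (w : Fin (n + 1) → ℝ) :
    Matrix (Fin n) (Fin n) ℝ :=
  Matrix.of fun i j => ∑ v : Fin (n + 1),
    (if v ≠ G.root ∧ G.IsAncestor v j.succ then w v else 0) *
      (if G.IsAncestor v i.succ then (1 : ℝ) else 0)

lemma lap_mul_Mres {n : ℕ} (G : FinRootedTree (Fin (n + 1))) (hroot : G.root = 0)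
    (w : Fin (n + 1) → ℝ) (hw : ∀ v, v ≠ G.root → 0 < w v) (i j : Fin n) :
    ∑ x : Fin n, lap G w i.succ x.succ * Mres G w x j = if i = j then (1 : ℝ) else 0 := by
  set u : Fin (n + 1) := i.succ with hud
  have hu : u ≠ G.root := by rw [hroot, hud]; exact Fin.succ_ne_zero i
  have e1 : ∑ x : Fin n, lap G w u x.succ * Mres G w x j
      = ∑ v : Fin (n + 1), (if v ≠ G.root ∧ G.IsAncestor v j.succ then w v else 0) *
          (∑ x : Fin n, lap G w u x.succ * (if G.IsAncestor v x.succ then (1 : ℝ) else 0)) := by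
    simp only [Mres, Matrix.of_apply, Finset.mul_sum, Finset.sum_mul]
    rw [Finset.sum_comm]
    exact Finset.sum_congr rfl fun v _ => Finset.sum_congr rfl fun x _ => by ring
  rw [e1]
  have e2 : ∀ v : Fin (n + 1),
      (if v ≠ G.root ∧ G.IsAncestor v j.succ then w v else 0) *
          (∑ x : Fin n, lap G w u x.succ * (if G.IsAncestor v x.succ then (1 : ℝ) else 0))
        = (if v = u ∧ G.IsAncestor v j.succ then 1 else 0)
          - (if v ≠ G.root ∧ G.IsAncestor v j.succ ∧ G.parent v = u then 1 else 0) := by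
    intro v
    by_cases hva : v ≠ G.root ∧ G.IsAncestor v j.succ
    · have hv := hva.1
      have hred : ∑ x : Fin n, lap G w u x.succ * (if G.IsAncestor v x.succ then (1 : ℝ) else 0)
          = ∑ x : Fin (n + 1), lap G w u x * (if G.IsAncestor v x then (1 : ℝ) else 0) := by
        rw [Fin.sum_univ_succ]
        have h0 : ¬ G.IsAncestor v 0 := by
          rw [← hroot]
          intro hA
          exact hv (G.isAncestor_root_iff.1 hA)
        rw [if_neg h0, mul_zero, zero_add]
      rw [hred, lap_indicator G w u v hu hv, if_pos hva]
      have hwv : w v ≠ 0 := ne_of_gt (hw v hv)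
      have hwu : w u ≠ 0 := ne_of_gt (hw u hu)
      have hpu : G.parent u ≠ u := by
        intro h
        have := G.depth_parent u hu
        rw [h] at this
        omega
      by_cases h1 : v = u
      · have hp : G.parent v ≠ u := by rw [h1]; exact hpu
        rw [if_pos h1, if_neg hp, if_pos ⟨h1, hva.2⟩,
          if_neg (show ¬(v ≠ G.root ∧ G.IsAncestor v j.succ ∧ G.parent v = u) from
            fun hc => hp hc.2.2), h1, sub_zero, sub_zero]
        field_simp
      · rw [if_neg h1,
          if_neg (show ¬(v = u ∧ G.IsAncestor v j.succ) from fun hc => h1 hc.1)]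
        by_cases h2 : G.parent v = u
        · rw [if_pos h2, if_pos ⟨hv, hva.2, h2⟩, zero_sub, zero_sub, mul_neg]
          field_simp
        · rw [if_neg h2,
            if_neg (show ¬(v ≠ G.root ∧ G.IsAncestor v j.succ ∧ G.parent v = u) from
              fun hc => h2 hc.2.2)]
          ring
    · rw [if_neg hva, zero_mul, if_neg, if_neg, sub_zero]
      · rintro ⟨ha, hb, hc⟩; exact hva ⟨ha, hb⟩
      · rintro ⟨rfl, hb⟩; exact hva ⟨hu, hb⟩
  rw [Finset.sum_congr rfl fun v _ => e2 v, Finset.sum_sub_distrib, child_sum G u j.succ hu]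
  have e3 : (∑ v : Fin (n + 1), if v = u ∧ G.IsAncestor v j.succ then (1 : ℝ) else 0)
      = if G.IsAncestor u j.succ then 1 else 0 := by
    rw [Finset.sum_eq_single u]
    · by_cases hA : G.IsAncestor u j.succ <;> simp [hA]
    · intro v _ hvne; rw [if_neg]; rintro ⟨rfl, _⟩; exact hvne rfl
    · intro hmem; exact absurd (Finset.mem_univ u) hmem
  rw [e3]
  by_cases hij : i = j
  · subst hij
    simp [G.isAncestor_self, hud]
  · have huj : u ≠ j.succ := by
      rw [hud]; intro h; exact hij (Fin.succ_injective n h)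
    by_cases hA : G.IsAncestor u j.succ <;> simp [hA, huj, hij]


/-- The effective resistance `(e_m - e_k)ᵀ R (e_m - e_k)` between two non-root nodes equals the
sum of the edge weights along the unique path joining them (the edges whose lower endpoint is an
ancestor of exactly one of the two nodes). -/
theorem effectiveResistance_eq_path_sum {n : ℕ} (G : FinRootedTree (Fin (n + 1)))
    (hroot : G.root = 0) (w : Fin (n + 1) → ℝ) (hw : ∀ v, v ≠ G.root → 0 < w v)
    (m k : Fin n) :
    (Pi.single m 1 - Pi.single k 1) ⬝ᵥ
        (redLapInv G w).mulVec (Pi.single m 1 - Pi.single k 1) =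
      ∑ᶠ v ∈ {v | v ≠ G.root ∧
          ((G.IsAncestor v m.succ ∧ ¬G.IsAncestor v k.succ) ∨
            (G.IsAncestor v k.succ ∧ ¬G.IsAncestor v m.succ))}, w v := by
  classical
  have hM : (Matrix.of fun i j : Fin n => lap G w i.succ j.succ) * Mres G w = 1 := by
    ext i j
    simpa [Matrix.mul_apply, Matrix.one_apply] using lap_mul_Mres G hroot w hw i j
  have hinv : redLapInv G w = Mres G w := Matrix.inv_eq_right_inv hM
  rw [hinv]
  have hvmul : ∀ i, (Mres G w).mulVec (Pi.single m 1 - Pi.single k 1) i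
      = Mres G w i m - Mres G w i k := by
    intro i
    simp [Matrix.mulVec, dotProduct, Pi.sub_apply, mul_sub, Finset.sum_sub_distrib,
      Pi.single_apply, mul_ite, mul_one, mul_zero, Finset.sum_ite_eq']
  have hexp : (Pi.single m 1 - Pi.single k 1) ⬝ᵥ
        (Mres G w).mulVec (Pi.single m 1 - Pi.single k 1)
      = Mres G w m m - Mres G w m k - (Mres G w k m - Mres G w k k) := by
    rw [dotProduct]
    rw [Finset.sum_congr rfl fun i _ => by rw [hvmul i]]
    simp [Pi.sub_apply, Pi.single_apply, sub_mul, ite_mul, one_mul, zero_mul,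
      Finset.sum_sub_distrib, Finset.sum_ite_eq']
  rw [hexp]
  have hset : {v : Fin (n + 1) | v ≠ G.root ∧
      ((G.IsAncestor v m.succ ∧ ¬G.IsAncestor v k.succ) ∨
        (G.IsAncestor v k.succ ∧ ¬G.IsAncestor v m.succ))}
      = ↑(Finset.univ.filter fun v : Fin (n + 1) => v ≠ G.root ∧
        ((G.IsAncestor v m.succ ∧ ¬G.IsAncestor v k.succ) ∨
          (G.IsAncestor v k.succ ∧ ¬G.IsAncestor v m.succ))) := by
    ext v
    simp
  rw [hset, finsum_mem_coe_finset, Finset.sum_filter]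
  simp only [Mres, Matrix.of_apply]
  rw [← Finset.sum_sub_distrib, ← Finset.sum_sub_distrib, ← Finset.sum_sub_distrib]
  refine Finset.sum_congr rfl fun v _ => ?_
  by_cases hR : v ≠ G.root <;> by_cases hP : G.IsAncestor v m.succ <;>
    by_cases hQ : G.IsAncestor v k.succ <;> simp [hR, hP, hQ]
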